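/- Any solution W of the discrete Riccati equation W(pt) = p^{-ν₂/2}(W(t) + p^{(ν₂+1)/2} pt)/(W(t) + p^{ν₂/2}) satisfies the symmetric q-P(D_5^{(1)}) equation W(pt) W(p^{-1}t) = -(W(t) + p^{ν₁/2} pt)(W(t) - p^{-ν₁/2} pt)/((W(t) + p^{ν₂/2})(W(t) - p^{-ν₂/2})) when ν₁ = ν₂ + 1. -/
import Mathlib


/-- Any solution `W` of the discrete Riccati equation
`W(pt) = p^{-ν₂/2}(W(t) + p^{(ν₂+1)/2} pt)/(W(t) + p^{ν₂/2})` satisfies the symmetric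
q-P(D₅⁽¹⁾) equation
`W(pt)W(p⁻¹t) = -(W(t) + p^{ν₁/2} pt)(W(t) - p^{-ν₁/2} pt)/((W(t) + p^{ν₂/2})(W(t) - p^{-ν₂/2}))`
when `ν₁ = ν₂ + 1`. Here `sp` is a fixed branch of `p^{1/2}`, `pn1` of `p^{ν₁/2}` and
`pn2` of `p^{ν₂/2}`; the condition `ν₁ = ν₂ + 1` reads `pn1 = pn2 · sp`. -/
theorem symQPD5_of_riccati (p sp pn1 pn2 : ℂ) (hp : p ≠ 0) (hsp : sp ^ 2 = p)
    (hpn2 : pn2 ≠ 0) (h12 : pn1 = pn2 * sp) (W : ℂ → ℂ)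
    (hden1 : ∀ t, W t + pn2 ≠ 0) (hden2 : ∀ t, W t - pn2⁻¹ ≠ 0)
    (hRic : ∀ t, W (p * t) = pn2⁻¹ * (W t + pn2 * sp * (p * t)) / (W t + pn2)) :
    ∀ t, W (p * t) * W (p⁻¹ * t)
      = -((W t + pn1 * (p * t)) * (W t - pn1⁻¹ * (p * t)))
          / ((W t + pn2) * (W t - pn2⁻¹)) := by
  intro t
  have hsp0 : sp ≠ 0 := by
    intro h; apply hp; rw [← hsp, h]; ring
  have hpn1 : pn1 ≠ 0 := by rw [h12]; exact mul_ne_zero hpn2 hsp0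
  have ht : p * (p⁻¹ * t) = t := by field_simp
  have h2 := hRic (p⁻¹ * t)
  rw [ht] at h2
  have h1 := hRic t
  have hd := hden1 (p⁻¹ * t)
  have hdt := hden1 t
  have hd2 := hden2 t
  have h2' : W t * (W (p⁻¹ * t) + pn2) = pn2⁻¹ * (W (p⁻¹ * t) + pn2 * sp * t) := by
    rw [h2, div_mul_cancel₀ _ hd]
  have h2'' : W t * (W (p⁻¹ * t) + pn2) * pn2 = W (p⁻¹ * t) + pn2 * sp * t := by
    rw [h2', mul_comm, ← mul_assoc, mul_inv_cancel₀ hpn2, one_mul]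
  have hWinv : W (p⁻¹ * t) = (sp * t - pn2 * W t) / (W t - pn2⁻¹) := by
    rw [eq_div_iff hd2]
    apply mul_right_cancel₀ hpn2
    rw [mul_assoc, sub_mul, inv_mul_cancel₀ hpn2]
    linear_combination h2''
  rw [h1, hWinv, h12, ← hsp]
  have hd2' : W t * pn2 - 1 ≠ 0 := by
    intro h; apply hd2
    field_simp
    linear_combination h
  field_simp
  ring
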